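/- Let G be a connected graph with n ≥ 2 vertices and m edges. Then the multiplicative degree-Kirchhoff index of the subdivision of G satisfies R*(S(G)) = 8·R*(G) + 2m(2m − 2n + 1). -/

import Mathlib

open BigOperators Matrix

namespace KirchhoffPaper

/-- `B` is a Moore–Penrose (pseudo)inverse of `A`. -/
def IsMoorePenrose {n : Type*} [Fintype n] [DecidableEq n] (A B : Matrix n n ℝ) : Prop :=
  A * B * A = A ∧ B * A * B = B ∧ (A * B)ᵀ = A * B ∧ (B * A)ᵀ = B * A

variable {V : Type*}

/-- The resistance distance between `i` and `j` in `G`: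
`Ω_{ij} = L⁺_{ii} + L⁺_{jj} - 2 L⁺_{ij}` with `L⁺` the Moore–Penrose inverse of the Laplacian. -/
noncomputable def resistanceDistance [Fintype V] [DecidableEq V]
    (G : SimpleGraph V) [DecidableRel G.Adj] (i j : V) : ℝ :=
  letI := Classical.propDecidable
  if h : ∃ B, IsMoorePenrose (G.lapMatrix ℝ) B then
    h.choose i i + h.choose j j - 2 * h.choose i j
  else 0

/-- Kirchhoff index `R(G) = Σ_{{i,j}⊆V} Ω_{ij}` (as half the sum over ordered pairs;
note `Ω_{ii} = 0`). -/
noncomputable def kirchhoffIndex [Fintype V] [DecidableEq V]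
    (G : SimpleGraph V) [DecidableRel G.Adj] : ℝ :=
  (1 / 2) * ∑ i, ∑ j, resistanceDistance G i j

/-- Additive degree-Kirchhoff index `R⁺(G) = Σ_{{i,j}⊆V} (d_i + d_j) Ω_{ij}`. -/
noncomputable def addDegKirchhoffIndex [Fintype V] [DecidableEq V]
    (G : SimpleGraph V) [DecidableRel G.Adj] : ℝ :=
  (1 / 2) * ∑ i, ∑ j, ((G.degree i : ℝ) + (G.degree j : ℝ)) * resistanceDistance G i j

/-- Multiplicative degree-Kirchhoff index `R*(G) = Σ_{{i,j}⊆V} d_i d_j Ω_{ij}`. -/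
noncomputable def mulDegKirchhoffIndex [Fintype V] [DecidableEq V]
    (G : SimpleGraph V) [DecidableRel G.Adj] : ℝ :=
  (1 / 2) * ∑ i, ∑ j, ((G.degree i : ℝ) * (G.degree j : ℝ)) * resistanceDistance G i j

/-- The subdivision `S(G)`: each edge of `G` is replaced by a path of length two through a
new vertex (one new vertex per edge of `G`). -/
def subdivision [DecidableEq V] (G : SimpleGraph V) : SimpleGraph (V ⊕ G.edgeSet) where
  Adj x y :=
    match x, y with
    | Sum.inl u, Sum.inr e => u ∈ (e : Sym2 V)
    | Sum.inr e, Sum.inl u => u ∈ (e : Sym2 V)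
    | _, _ => False
  symm := by constructor; rintro (u | e) (v | f) h <;> exact h
  loopless := by constructor; rintro (u | e) h <;> exact h

/-- The triangulation `T(G)`: each edge `uv` of `G` is turned into a triangle `uwv`
with `w` a new vertex associated with `uv`. -/
def triangulation [DecidableEq V] (G : SimpleGraph V) : SimpleGraph (V ⊕ G.edgeSet) where
  Adj x y :=
    match x, y with
    | Sum.inl u, Sum.inl v => G.Adj u v
    | Sum.inl u, Sum.inr e => u ∈ (e : Sym2 V)
    | Sum.inr e, Sum.inl u => u ∈ (e : Sym2 V)
    | _, _ => False
  symm := by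
    constructor
    rintro (u | e) (v | f) h
    · exact G.symm.symm _ _ h
    · exact h
    · exact h
    · exact h
  loopless := by
    constructor
    rintro (u | e) h
    · exact G.loopless.irrefl u h
    · exact h

instance [Fintype V] [DecidableEq V] (G : SimpleGraph V) [DecidableRel G.Adj] :
    DecidableRel (subdivision G).Adj := fun x y =>
  match x, y with
  | Sum.inl _, Sum.inl _ => inferInstanceAs (Decidable False)
  | Sum.inl u, Sum.inr e => inferInstanceAs (Decidable (u ∈ (e : Sym2 V)))
  | Sum.inr e, Sum.inl u => inferInstanceAs (Decidable (u ∈ (e : Sym2 V)))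
  | Sum.inr _, Sum.inr _ => inferInstanceAs (Decidable False)

instance [Fintype V] [DecidableEq V] (G : SimpleGraph V) [DecidableRel G.Adj] :
    DecidableRel (triangulation G).Adj := fun x y =>
  match x, y with
  | Sum.inl u, Sum.inl v => inferInstanceAs (Decidable (G.Adj u v))
  | Sum.inl u, Sum.inr e => inferInstanceAs (Decidable (u ∈ (e : Sym2 V)))
  | Sum.inr e, Sum.inl u => inferInstanceAs (Decidable (u ∈ (e : Sym2 V)))
  | Sum.inr _, Sum.inr _ => inferInstanceAs (Decidable False)

/-- A bundled finite simple graph (with decidable adjacency), used for iterating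
the subdivision and triangulation constructions. -/
structure FGraph where
  V : Type*
  [fV : Fintype V]
  [dV : DecidableEq V]
  G : SimpleGraph V
  [dG : DecidableRel G.Adj]

attribute [instance] FGraph.fV FGraph.dV FGraph.dG

/-- Subdivision, as an operation on bundled graphs. -/
def FGraph.subdiv (H : FGraph) : FGraph := { V := H.V ⊕ H.G.edgeSet, G := subdivision H.G }

/-- Triangulation, as an operation on bundled graphs. -/
def FGraph.triang (H : FGraph) : FGraph := { V := H.V ⊕ H.G.edgeSet, G := triangulation H.G }

/-- Kirchhoff index of a bundled graph. -/
noncomputable def FGraph.R (H : FGraph) : ℝ := kirchhoffIndex H.G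

/-- Additive degree-Kirchhoff index of a bundled graph. -/
noncomputable def FGraph.Rplus (H : FGraph) : ℝ := addDegKirchhoffIndex H.G

/-- Multiplicative degree-Kirchhoff index of a bundled graph. -/
noncomputable def FGraph.Rstar (H : FGraph) : ℝ := mulDegKirchhoffIndex H.G

set_option linter.unusedSectionVars false
set_option linter.unusedVariables false

section MP
open Finset

variable {W : Type*} [Fintype W] [DecidableEq W]

lemma mp_unique {A P C : Matrix W W ℝ} (hB : IsMoorePenrose A P) (hC : IsMoorePenrose A C) :
    P = C := by
  obtain ⟨hB1, hB2, hB3, hB4⟩ := hB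
  obtain ⟨hC1, hC2, hC3, hC4⟩ := hC
  have hAB : A * P = A * C := by
    have h1 : A * P = (A * C) * (A * P) := by
      conv_lhs => rw [← hC1]
      simp only [mul_assoc]
    calc A * P = (A * C) * (A * P) := h1
      _ = ((A * P) * (A * C))ᵀ := by rw [transpose_mul, hB3, hC3]
      _ = ((A * P * A) * C)ᵀ := by simp only [mul_assoc]
      _ = (A * C)ᵀ := by rw [hB1]
      _ = A * C := hC3
  have hBA : P * A = C * A := by
    have h1 : P * A = (P * A) * (C * A) := by
      conv_lhs => rw [← hC1]
      simp only [mul_assoc]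
    calc P * A = (P * A) * (C * A) := h1
      _ = ((C * A) * (P * A))ᵀ := by rw [transpose_mul, hB4, hC4]
      _ = (C * (A * P * A))ᵀ := by simp only [mul_assoc]
      _ = (C * A)ᵀ := by rw [hB1]
      _ = C * A := hC4
  calc P = P * A * P := hB2.symm
    _ = P * (A * C) := by rw [mul_assoc, hAB]
    _ = (P * A) * C := by rw [mul_assoc]
    _ = (C * A) * C := by rw [hBA]
    _ = C := hC2

/-- The all-ones matrix. -/
def onesM (W : Type*) : Matrix W W ℝ := Matrix.of fun _ _ => 1

lemma onesM_mul_onesM : onesM W * onesM W = (Fintype.card W : ℝ) • onesM W := by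
  ext i j
  simp [onesM, Matrix.mul_apply, Finset.card_univ]

lemma onesM_transpose : (onesM W)ᵀ = onesM W := by ext i j; simp [onesM]

variable (G : SimpleGraph W) [DecidableRel G.Adj]

lemma lap_mul_onesM : G.lapMatrix ℝ * onesM W = 0 := by
  ext i j
  have := congrFun (G.lapMatrix_mulVec_const_eq_zero (R := ℝ)) i
  simpa [Matrix.mulVec, dotProduct, onesM, Matrix.mul_apply] using this

lemma onesM_mul_lap : onesM W * G.lapMatrix ℝ = 0 := by
  have h := congrArg Matrix.transpose (lap_mul_onesM G)
  rwa [Matrix.transpose_mul, onesM_transpose, (G.isSymm_lapMatrix (R := ℝ)).eq, Matrix.transpose_zero] at h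

end MP

section GInv
open Finset

variable {W : Type*} [Fintype W] [DecidableEq W]
variable (G : SimpleGraph W) [DecidableRel G.Adj]

/-- Explicit Moore-Penrose inverse of the Laplacian of a connected graph. -/
noncomputable def gInv : Matrix W W ℝ :=
  (G.lapMatrix ℝ + (Fintype.card W : ℝ)⁻¹ • onesM W)⁻¹ - (Fintype.card W : ℝ)⁻¹ • onesM W

lemma onesM_mulVec (x : W → ℝ) : onesM W *ᵥ x = fun _ => ∑ i, x i := by
  ext i; simp [onesM, Matrix.mulVec, dotProduct]

lemma posDef_Q (hc : G.Connected) :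
    (G.lapMatrix ℝ + (Fintype.card W : ℝ)⁻¹ • onesM W).PosDef := by
  have hne : Nonempty W := hc.nonempty
  have hcard : (0 : ℝ) < (Fintype.card W : ℝ) := by
    exact_mod_cast Fintype.card_pos
  refine Matrix.posDef_iff_dotProduct_mulVec.mpr ⟨?_, ?_⟩
  · have h1 : (G.lapMatrix ℝ).IsHermitian := (G.posSemidef_lapMatrix ℝ).1
    have h2 : ((Fintype.card W : ℝ)⁻¹ • onesM W).IsHermitian := by
      ext i j
      simp [onesM, Matrix.conjTranspose_apply]
    exact h1.add h2
  · intro x hx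
    rw [star_trivial]
    have hquad : x ⬝ᵥ ((G.lapMatrix ℝ + (Fintype.card W : ℝ)⁻¹ • onesM W) *ᵥ x)
        = x ⬝ᵥ (G.lapMatrix ℝ *ᵥ x) + (Fintype.card W : ℝ)⁻¹ * (∑ i, x i) ^ 2 := by
      simp only [Matrix.add_mulVec, dotProduct_add, smul_mulVec, onesM_mulVec,
        dotProduct_smul, smul_eq_mul]
      congr 1
      simp only [dotProduct]
      rw [← Finset.sum_mul, sq]
    rw [hquad]
    have hL : 0 ≤ x ⬝ᵥ (G.lapMatrix ℝ *ᵥ x) := by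
      have := (G.posSemidef_lapMatrix ℝ).dotProduct_mulVec_nonneg x
      rwa [star_trivial] at this
    rcases eq_or_lt_of_le hL with h0 | hpos
    · -- Laplacian quadratic form vanishes: x is constant
      have hconst : ∀ i j : W, x i = x j := by
        have hz : Matrix.toLinearMap₂' ℝ (G.lapMatrix ℝ) x x = 0 := by
          rw [Matrix.toLinearMap₂'_apply']
          exact h0.symm
        rw [G.lapMatrix_toLinearMap₂'_apply'_eq_zero_iff_forall_reachable] at hz
        exact fun i j => hz i j (hc.preconnected i j)
      obtain ⟨w⟩ := hne
      have hxw : x w ≠ 0 := by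
        intro h
        apply hx
        funext i
        rw [hconst i w, h]; rfl
      have hsum : ∑ i, x i = (Fintype.card W : ℝ) * x w := by
        rw [Finset.sum_congr rfl fun i _ => hconst i w]
        simp [Finset.card_univ, mul_comm]
      rw [← h0, zero_add, hsum]
      positivity
    · have : 0 ≤ (Fintype.card W : ℝ)⁻¹ * (∑ i, x i) ^ 2 := by positivity
      linarith

lemma Q_mul_inv (hc : G.Connected) :
    (G.lapMatrix ℝ + (Fintype.card W : ℝ)⁻¹ • onesM W) *
      (G.lapMatrix ℝ + (Fintype.card W : ℝ)⁻¹ • onesM W)⁻¹ = 1 :=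
  Matrix.mul_nonsing_inv _ (isUnit_iff_ne_zero.2 (ne_of_gt (posDef_Q G hc).det_pos))

lemma inv_mul_Q (hc : G.Connected) :
    (G.lapMatrix ℝ + (Fintype.card W : ℝ)⁻¹ • onesM W)⁻¹ *
      (G.lapMatrix ℝ + (Fintype.card W : ℝ)⁻¹ • onesM W) = 1 :=
  Matrix.nonsing_inv_mul _ (isUnit_iff_ne_zero.2 (ne_of_gt (posDef_Q G hc).det_pos))

lemma card_smul_inv_smul (hc : G.Connected) :
    (Fintype.card W : ℝ)⁻¹ * (Fintype.card W : ℝ) = 1 := by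
  have hne : Nonempty W := hc.nonempty
  have : (Fintype.card W : ℝ) ≠ 0 := by
    exact_mod_cast Fintype.card_ne_zero
  field_simp

lemma Q_mul_onesM (hc : G.Connected) :
    (G.lapMatrix ℝ + (Fintype.card W : ℝ)⁻¹ • onesM W) * onesM W = onesM W := by
  rw [add_mul, lap_mul_onesM, zero_add, Matrix.smul_mul, onesM_mul_onesM, smul_smul,
    card_smul_inv_smul G hc, one_smul]

lemma onesM_mul_Q (hc : G.Connected) :
    onesM W * (G.lapMatrix ℝ + (Fintype.card W : ℝ)⁻¹ • onesM W) = onesM W := by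
  rw [mul_add, onesM_mul_lap, zero_add, Matrix.mul_smul, onesM_mul_onesM, smul_smul,
    card_smul_inv_smul G hc, one_smul]

lemma onesM_mul_Qinv (hc : G.Connected) :
    onesM W * (G.lapMatrix ℝ + (Fintype.card W : ℝ)⁻¹ • onesM W)⁻¹ = onesM W := by
  have h : onesM W * (G.lapMatrix ℝ + (Fintype.card W : ℝ)⁻¹ • onesM W)⁻¹
      = (onesM W * (G.lapMatrix ℝ + (Fintype.card W : ℝ)⁻¹ • onesM W)) *
        (G.lapMatrix ℝ + (Fintype.card W : ℝ)⁻¹ • onesM W)⁻¹ := by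
    rw [onesM_mul_Q G hc]
  rw [h, mul_assoc, Q_mul_inv G hc, mul_one]

lemma Qinv_mul_onesM (hc : G.Connected) :
    (G.lapMatrix ℝ + (Fintype.card W : ℝ)⁻¹ • onesM W)⁻¹ * onesM W = onesM W := by
  have h : (G.lapMatrix ℝ + (Fintype.card W : ℝ)⁻¹ • onesM W)⁻¹ * onesM W
      = (G.lapMatrix ℝ + (Fintype.card W : ℝ)⁻¹ • onesM W)⁻¹ *
        ((G.lapMatrix ℝ + (Fintype.card W : ℝ)⁻¹ • onesM W) * onesM W) := by
    rw [Q_mul_onesM G hc]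
  rw [h, ← mul_assoc, inv_mul_Q G hc, one_mul]

lemma lap_mul_gInv (hc : G.Connected) :
    G.lapMatrix ℝ * gInv G = 1 - (Fintype.card W : ℝ)⁻¹ • onesM W := by
  unfold gInv
  rw [mul_sub, Matrix.mul_smul, lap_mul_onesM, smul_zero, sub_zero]
  have h : G.lapMatrix ℝ * (G.lapMatrix ℝ + (Fintype.card W : ℝ)⁻¹ • onesM W)⁻¹
      = (G.lapMatrix ℝ + (Fintype.card W : ℝ)⁻¹ • onesM W - (Fintype.card W : ℝ)⁻¹ • onesM W) *
        (G.lapMatrix ℝ + (Fintype.card W : ℝ)⁻¹ • onesM W)⁻¹ := by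
    rw [add_sub_cancel_right]
  rw [h, sub_mul, Q_mul_inv G hc, Matrix.smul_mul, onesM_mul_Qinv G hc]

lemma gInv_mul_lap (hc : G.Connected) :
    gInv G * G.lapMatrix ℝ = 1 - (Fintype.card W : ℝ)⁻¹ • onesM W := by
  unfold gInv
  rw [sub_mul, Matrix.smul_mul, onesM_mul_lap, smul_zero, sub_zero]
  have h : (G.lapMatrix ℝ + (Fintype.card W : ℝ)⁻¹ • onesM W)⁻¹ * G.lapMatrix ℝ
      = (G.lapMatrix ℝ + (Fintype.card W : ℝ)⁻¹ • onesM W)⁻¹ *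
        (G.lapMatrix ℝ + (Fintype.card W : ℝ)⁻¹ • onesM W - (Fintype.card W : ℝ)⁻¹ • onesM W) := by
    rw [add_sub_cancel_right]
  rw [h, mul_sub, inv_mul_Q G hc, Matrix.mul_smul, Qinv_mul_onesM G hc]

lemma onesM_mul_gInv (hc : G.Connected) : onesM W * gInv G = 0 := by
  unfold gInv
  rw [mul_sub, onesM_mul_Qinv G hc, Matrix.mul_smul, onesM_mul_onesM, smul_smul,
    card_smul_inv_smul G hc, one_smul, sub_self]

lemma gInv_transpose : (gInv G)ᵀ = gInv G := by
  unfold gInv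
  rw [Matrix.transpose_sub, Matrix.transpose_smul, onesM_transpose,
    Matrix.transpose_nonsing_inv]
  congr 2
  rw [Matrix.transpose_add, (G.isSymm_lapMatrix (R := ℝ)).eq, Matrix.transpose_smul, onesM_transpose]

lemma isMP_gInv (hc : G.Connected) : IsMoorePenrose (G.lapMatrix ℝ) (gInv G) := by
  refine ⟨?_, ?_, ?_, ?_⟩
  · rw [lap_mul_gInv G hc, sub_mul, one_mul, Matrix.smul_mul, onesM_mul_lap, smul_zero, sub_zero]
  · rw [gInv_mul_lap G hc, sub_mul, one_mul, Matrix.smul_mul, onesM_mul_gInv G hc,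
      smul_zero, sub_zero]
  · rw [lap_mul_gInv G hc, Matrix.transpose_sub, Matrix.transpose_one, Matrix.transpose_smul,
      onesM_transpose]
  · rw [gInv_mul_lap G hc, Matrix.transpose_sub, Matrix.transpose_one, Matrix.transpose_smul,
      onesM_transpose]

lemma resistance_eq {W' : Type*} [Fintype W'] {iDE : DecidableEq W'} {G' : SimpleGraph W'}
    {iDR : DecidableRel G'.Adj} (g : Matrix W' W' ℝ)
    (hg : IsMoorePenrose (G'.lapMatrix ℝ) g) (i j : W') :
    resistanceDistance G' i j = g i i + g j j - 2 * g i j := by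
  have h1 : iDR = fun a b => Classical.propDecidable (G'.Adj a b) := by
    funext a b; exact Subsingleton.elim _ _
  subst h1
  have h2 : iDE = fun a b => Classical.propDecidable (a = b) := by
    funext a b; exact Subsingleton.elim _ _
  subst h2
  letI : DecidableEq W' := fun a b => Classical.propDecidable (a = b)
  rw [resistanceDistance]
  split
  next h => rw [mp_unique h.choose_spec hg]
  next h => exact absurd ⟨g, hg⟩ h

end GInv

section Quad
open Finset

variable {W : Type*} [Fintype W] [DecidableEq W]

/-- The signed indicator vector of a pair of vertices. -/
def pairVec (x y : W) : W → ℝ := fun w => (if w = x then (1:ℝ) else 0) - (if w = y then 1 else 0)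

lemma sum_pairVec (x y : W) : ∑ i, pairVec x y i = 0 := by
  simp [pairVec, Finset.sum_sub_distrib]

lemma mulVec_pairVec (M : Matrix W W ℝ) (x y : W) :
    M *ᵥ pairVec x y = fun i => M i x - M i y := by
  ext i
  simp [pairVec, Matrix.mulVec, dotProduct, mul_sub, Finset.sum_sub_distrib,
    mul_ite, mul_one, mul_zero, Finset.sum_ite_eq']

lemma dot_pairVec (M : Matrix W W ℝ) (x y : W) :
    pairVec x y ⬝ᵥ (M *ᵥ pairVec x y) = M x x + M y y - M x y - M y x := by
  rw [mulVec_pairVec]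
  simp only [dotProduct, pairVec, sub_mul, ite_mul, one_mul, zero_mul,
    Finset.sum_sub_distrib, Finset.sum_ite_eq', Finset.mem_univ, if_true]
  ring

lemma quad_transfer (L M X : Matrix W W ℝ) (c : ℝ)
    (hLsym : Lᵀ = L) (hLXL : L * X * L = L) (hLM : L * M = 1 - c • onesM W)
    (v : W → ℝ) (hv : ∑ i, v i = 0) :
    v ⬝ᵥ (X *ᵥ v) = v ⬝ᵥ (M *ᵥ v) := by
  have hMv : L *ᵥ (M *ᵥ v) = v := by
    rw [Matrix.mulVec_mulVec, hLM, Matrix.sub_mulVec, Matrix.one_mulVec, smul_mulVec,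
      onesM_mulVec]
    ext i
    simp [hv]
  set w := M *ᵥ v with hw
  have step1 : v ⬝ᵥ (X *ᵥ v) = (L *ᵥ w) ⬝ᵥ ((X * L) *ᵥ w) := by
    rw [← Matrix.mulVec_mulVec, hMv]
  have step2 : (L *ᵥ w) ⬝ᵥ ((X * L) *ᵥ w) = w ⬝ᵥ ((L * (X * L)) *ᵥ w) := by
    rw [← Matrix.mulVec_mulVec (M := L)]
    rw [show L *ᵥ w = w ᵥ* L from by conv_rhs => rw [← hLsym, Matrix.vecMul_transpose]]
    rw [← Matrix.dotProduct_mulVec, Matrix.mulVec_mulVec]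
  rw [step1, step2, ← mul_assoc, hLXL, hMv, dotProduct_comm]

lemma mulDeg_formula (H : SimpleGraph W) [DecidableRel H.Adj] (M : Matrix W W ℝ)
    (hM : ∀ i j, resistanceDistance H i j = M i i + M j j - 2 * M i j) :
    mulDegKirchhoffIndex H = (∑ x, (H.degree x : ℝ)) * (∑ x, (H.degree x : ℝ) * M x x)
      - ∑ x, ∑ y, (H.degree x : ℝ) * M x y * (H.degree y : ℝ) := by
  rw [mulDegKirchhoffIndex]
  simp only [hM]
  have hexp : ∀ x y : W, ((H.degree x : ℝ) * (H.degree y : ℝ)) * (M x x + M y y - 2 * M x y)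
      = ((H.degree x : ℝ) * M x x) * (H.degree y : ℝ)
        + (H.degree x : ℝ) * ((H.degree y : ℝ) * M y y)
        - 2 * ((H.degree x : ℝ) * M x y * (H.degree y : ℝ)) := by
    intro x y; ring
  simp only [hexp, Finset.sum_sub_distrib, Finset.sum_add_distrib, ← Finset.mul_sum]
  rw [← Finset.sum_mul, ← Finset.sum_mul]
  ring

end Quad

section Subdiv
open Finset

variable {W : Type*} [Fintype W] [DecidableEq W]
variable (G : SimpleGraph W) [DecidableRel G.Adj]

/-- Vertex-edge incidence matrix. -/
def Bmat : Matrix W G.edgeSet ℝ := Matrix.of fun v e => if v ∈ (e : Sym2 W) then 1 else 0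

lemma sum_mem_edge {z : Sym2 W} (hz : z ∈ G.edgeSet) :
    ∑ v : W, (if v ∈ z then (1:ℝ) else 0) = 2 := by
  induction z using Sym2.ind with
  | _ a b =>
    have hab : a ≠ b := G.ne_of_adj (G.mem_edgeSet.1 hz)
    have hsplit : ∀ v : W, (if v ∈ s(a,b) then (1:ℝ) else 0)
        = (if v = a then (1:ℝ) else 0) + (if v = b then 1 else 0) := by
      intro v
      rcases eq_or_ne v a with rfl | hva
      · simp [Sym2.mem_iff, hab]
      · rcases eq_or_ne v b with rfl | hvb
        · simp [Sym2.mem_iff, hva]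
        · simp [Sym2.mem_iff, hva, hvb]
    rw [Finset.sum_congr rfl fun v _ => hsplit v, Finset.sum_add_distrib]
    simp only [Finset.sum_ite_eq', Finset.mem_univ, if_true]
    norm_num

lemma col_sum_Bmat (e : G.edgeSet) : ∑ v : W, Bmat G v e = 2 := sum_mem_edge G e.2

lemma row_sum_Bmat (u : W) : ∑ e : G.edgeSet, Bmat G u e = (G.degree u : ℝ) := by
  have h1 : ∑ e : G.edgeSet, Bmat G u e
      = ∑ z ∈ G.edgeFinset, (if u ∈ z then (1:ℝ) else 0) := by
    rw [SimpleGraph.edgeFinset, ← Finset.sum_set_coe]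
    rfl
  rw [h1, Finset.sum_boole]
  have h2 : {z ∈ G.edgeFinset | u ∈ z} = G.incidenceFinset u :=
    (G.incidenceFinset_eq_filter u).symm
  rw [h2, G.card_incidenceFinset_eq_degree]

lemma pair_sum_Bmat (u v : W) : ∑ e : G.edgeSet, Bmat G u e * Bmat G v e
    = (if u = v then (G.degree u : ℝ) else 0) + (if G.Adj u v then 1 else 0) := by
  rcases eq_or_ne u v with rfl | huv
  · have hsq : ∀ e : G.edgeSet, Bmat G u e * Bmat G u e = Bmat G u e := by
      intro e
      by_cases h : u ∈ (e : Sym2 W) <;> simp [Bmat, h]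
    rw [Finset.sum_congr rfl fun e _ => hsq e, row_sum_Bmat]
    simp
  · have key : ∀ e : G.edgeSet, Bmat G u e * Bmat G v e
        = if (e : Sym2 W) = s(u,v) then 1 else 0 := by
      intro e
      by_cases h : (e : Sym2 W) = s(u,v)
      · rw [if_pos h]
        have hu : u ∈ (e : Sym2 W) := h ▸ Sym2.mem_mk_left u v
        have hv : v ∈ (e : Sym2 W) := h ▸ Sym2.mem_mk_right u v
        simp [Bmat, hu, hv]
      · rw [if_neg h]
        by_cases hu : u ∈ (e : Sym2 W)
        · by_cases hv : v ∈ (e : Sym2 W)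
          · exact absurd ((Sym2.mem_and_mem_iff huv).1 ⟨hu, hv⟩) h
          · simp [Bmat, hv]
        · simp [Bmat, hu]
    rw [Finset.sum_congr rfl fun e _ => key e, if_neg huv, zero_add]
    have h1 : ∑ e : G.edgeSet, (if (e : Sym2 W) = s(u,v) then (1:ℝ) else 0)
        = ∑ z ∈ G.edgeFinset, (if z = s(u,v) then (1:ℝ) else 0) := by
      rw [SimpleGraph.edgeFinset, ← Finset.sum_set_coe]
    rw [h1, Finset.sum_ite_eq' G.edgeFinset (s(u,v))]
    by_cases hadj : G.Adj u v
    · rw [if_pos (by rwa [SimpleGraph.mem_edgeFinset, SimpleGraph.mem_edgeSet]), if_pos hadj]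
    · rw [if_neg (by rwa [SimpleGraph.mem_edgeFinset, SimpleGraph.mem_edgeSet]), if_neg hadj]

lemma Bmat_mul_transpose : Bmat G * (Bmat G)ᵀ = G.degMatrix ℝ + G.adjMatrix ℝ := by
  ext u v
  rw [Matrix.mul_apply]
  simp only [Matrix.transpose_apply]
  rw [pair_sum_Bmat]
  simp [SimpleGraph.degMatrix, Matrix.diagonal_apply]

lemma subdiv_adj_inl_inr (u : W) (e : G.edgeSet) :
    (subdivision G).Adj (Sum.inl u) (Sum.inr e) ↔ u ∈ (e : Sym2 W) := Iff.rfl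

lemma subdiv_adj_inr_inl (u : W) (e : G.edgeSet) :
    (subdivision G).Adj (Sum.inr e) (Sum.inl u) ↔ u ∈ (e : Sym2 W) := Iff.rfl

lemma subdiv_not_adj_inl_inl (u v : W) : ¬ (subdivision G).Adj (Sum.inl u) (Sum.inl v) :=
  fun h => h

lemma subdiv_not_adj_inr_inr (e f : G.edgeSet) :
    ¬ (subdivision G).Adj (Sum.inr e) (Sum.inr f) := fun h => h

lemma subdiv_degree_inl (u : W) : ((subdivision G).degree (Sum.inl u) : ℝ) = (G.degree u : ℝ) := by
  rw [SimpleGraph.degree_eq_sum_if_adj, Fintype.sum_sum_type]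
  have h1 : ∀ v : W, (if (subdivision G).Adj (Sum.inl u) (Sum.inl v) then (1:ℝ) else 0) = 0 :=
    fun v => if_neg (subdiv_not_adj_inl_inl G u v)
  rw [Finset.sum_congr rfl fun v _ => h1 v, Finset.sum_const_zero, zero_add, ← row_sum_Bmat]
  rfl

lemma subdiv_degree_inr (e : G.edgeSet) : ((subdivision G).degree (Sum.inr e) : ℝ) = 2 := by
  rw [SimpleGraph.degree_eq_sum_if_adj, Fintype.sum_sum_type]
  have h1 : ∀ f : G.edgeSet, (if (subdivision G).Adj (Sum.inr e) (Sum.inr f) then (1:ℝ) else 0)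
      = 0 := fun f => if_neg (subdiv_not_adj_inr_inr G e f)
  rw [Finset.sum_congr rfl fun f _ => h1 f, Finset.sum_const_zero, add_zero]
  exact sum_mem_edge G e.2

lemma lapS_block : (subdivision G).lapMatrix ℝ
    = Matrix.fromBlocks (G.degMatrix ℝ) (-(Bmat G)) (-(Bmat G)ᵀ)
        ((2:ℝ) • (1 : Matrix G.edgeSet G.edgeSet ℝ)) := by
  ext x y
  cases x with
  | inl u =>
    cases y with
    | inl v =>
      simp only [SimpleGraph.lapMatrix, Matrix.sub_apply, SimpleGraph.degMatrix,
        Matrix.diagonal_apply, SimpleGraph.adjMatrix_apply, Matrix.fromBlocks_apply₁₁]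
      rcases eq_or_ne u v with rfl | huv
      · rw [if_pos rfl, if_pos rfl, if_neg (subdiv_not_adj_inl_inl G u u), sub_zero,
          subdiv_degree_inl]
      · rw [if_neg (by simp [huv]), if_neg huv, if_neg (subdiv_not_adj_inl_inl G u v), sub_zero]
    | inr e =>
      simp only [SimpleGraph.lapMatrix, Matrix.sub_apply, SimpleGraph.degMatrix,
        Matrix.diagonal_apply, SimpleGraph.adjMatrix_apply, Matrix.fromBlocks_apply₁₂,
        Matrix.neg_apply]
      rw [if_neg (by simp), zero_sub]
      simp only [Bmat, Matrix.of_apply]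
      exact congrArg Neg.neg (if_congr (subdiv_adj_inl_inr G u e) rfl rfl)
  | inr e =>
    cases y with
    | inl u =>
      simp only [SimpleGraph.lapMatrix, Matrix.sub_apply, SimpleGraph.degMatrix,
        Matrix.diagonal_apply, SimpleGraph.adjMatrix_apply, Matrix.fromBlocks_apply₂₁,
        Matrix.neg_apply, Matrix.transpose_apply]
      rw [if_neg (by simp), zero_sub]
      simp only [Bmat, Matrix.of_apply]
      exact congrArg Neg.neg (if_congr (subdiv_adj_inr_inl G u e) rfl rfl)
    | inr f =>
      simp only [SimpleGraph.lapMatrix, Matrix.sub_apply, SimpleGraph.degMatrix,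
        Matrix.diagonal_apply, SimpleGraph.adjMatrix_apply, Matrix.fromBlocks_apply₂₂,
        Matrix.smul_apply, Matrix.one_apply]
      rw [if_neg (subdiv_not_adj_inr_inr G e f), sub_zero]
      rcases eq_or_ne e f with rfl | hef
      · rw [if_pos rfl, if_pos rfl, subdiv_degree_inr]
        simp
      · rw [if_neg (by simp [hef]), if_neg hef]
        simp

lemma subdivision_connected (hc : G.Connected) : (subdivision G).Connected := by
  have hreach_adj : ∀ u v : W, G.Adj u v →
      (subdivision G).Reachable (Sum.inl u) (Sum.inl v) := by
    intro u v h
    have he : s(u,v) ∈ G.edgeSet := G.mem_edgeSet.2 h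
    have h1 : (subdivision G).Adj (Sum.inl u) (Sum.inr ⟨s(u,v), he⟩) := Sym2.mem_mk_left u v
    have h2 : (subdivision G).Adj (Sum.inr ⟨s(u,v), he⟩) (Sum.inl v) := Sym2.mem_mk_right u v
    exact h1.reachable.trans h2.reachable
  have hreach : ∀ u v : W, (subdivision G).Reachable (Sum.inl u) (Sum.inl v) := by
    intro u v
    obtain ⟨p⟩ := hc.preconnected u v
    induction p with
    | nil => exact SimpleGraph.Reachable.refl _
    | cons h p ih => exact (hreach_adj _ _ h).trans ih
  have hedge : ∀ e : G.edgeSet, ∃ u : W, (subdivision G).Adj (Sum.inl u) (Sum.inr e) := by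
    rintro ⟨z, hz⟩
    induction z using Sym2.ind with
    | _ a b => exact ⟨a, Sym2.mem_mk_left a b⟩
  rw [SimpleGraph.connected_iff]
  refine ⟨?_, ?_⟩
  · intro x y
    cases x with
    | inl u =>
      cases y with
      | inl v => exact hreach u v
      | inr e =>
        obtain ⟨w', hw⟩ := hedge e
        exact (hreach u w').trans hw.reachable
    | inr e =>
      cases y with
      | inl v =>
        obtain ⟨w', hw⟩ := hedge e
        exact hw.reachable.symm.trans (hreach w' v)
      | inr f =>
        obtain ⟨w', hw⟩ := hedge e
        obtain ⟨w'', hw'⟩ := hedge f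
        exact hw.reachable.symm.trans ((hreach w' w'').trans hw'.reachable)
  · obtain ⟨u⟩ := hc.nonempty
    exact ⟨Sum.inl u⟩

/-- The explicit symmetric generalized inverse of the subdivision Laplacian. -/
noncomputable def Xmat : Matrix (W ⊕ G.edgeSet) (W ⊕ G.edgeSet) ℝ :=
  Matrix.fromBlocks ((2:ℝ) • gInv G) (gInv G * Bmat G) ((Bmat G)ᵀ * gInv G)
    ((1/2 : ℝ) • (1 + (Bmat G)ᵀ * gInv G * Bmat G))

lemma Xmat_transpose : (Xmat G)ᵀ = Xmat G := by
  rw [Xmat, Matrix.fromBlocks_transpose, Matrix.fromBlocks_inj]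
  refine ⟨?_, ?_, ?_, ?_⟩
  · rw [Matrix.transpose_smul, gInv_transpose]
  · rw [Matrix.transpose_mul, Matrix.transpose_transpose, gInv_transpose]
  · rw [Matrix.transpose_mul, gInv_transpose]
  · rw [Matrix.transpose_smul, Matrix.transpose_add, Matrix.transpose_one]
    congr 1
    rw [Matrix.transpose_mul, Matrix.transpose_mul, Matrix.transpose_transpose, gInv_transpose,
      Matrix.mul_assoc]

lemma degMatrix_eq : G.degMatrix ℝ = G.lapMatrix ℝ + G.adjMatrix ℝ := by
  rw [SimpleGraph.lapMatrix, sub_add_cancel]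

lemma BBt_mul {κ : Type*} (M : Matrix W κ ℝ) :
    Bmat G * ((Bmat G)ᵀ * M)
      = G.lapMatrix ℝ * M + G.adjMatrix ℝ * M + G.adjMatrix ℝ * M := by
  rw [← Matrix.mul_assoc, Bmat_mul_transpose, degMatrix_eq, Matrix.add_mul, Matrix.add_mul]

lemma LS_mul_X (hc : G.Connected) :
    (subdivision G).lapMatrix ℝ * Xmat G
      = Matrix.fromBlocks (G.lapMatrix ℝ * gInv G)
          ((1/2:ℝ) • (G.lapMatrix ℝ * gInv G * Bmat G - Bmat G)) 0 1 := by
  rw [lapS_block, Xmat, Matrix.fromBlocks_multiply, Matrix.fromBlocks_inj]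
  refine ⟨?_, ?_, ?_, ?_⟩ <;>
  · simp only [degMatrix_eq, Matrix.mul_add, Matrix.add_mul, Matrix.sub_mul, Matrix.mul_sub,
      Matrix.mul_neg, Matrix.neg_mul, Matrix.mul_smul, Matrix.smul_mul, Matrix.mul_one,
      Matrix.one_mul, Matrix.zero_mul, Matrix.mul_zero, smul_add, smul_sub, smul_neg,
      smul_smul, Matrix.mul_assoc, BBt_mul, Bmat_mul_transpose]
    module

lemma LS_X_LS (hc : G.Connected) :
    (subdivision G).lapMatrix ℝ * Xmat G * (subdivision G).lapMatrix ℝ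
      = (subdivision G).lapMatrix ℝ := by
  have hLgL : G.lapMatrix ℝ * (gInv G * G.lapMatrix ℝ) = G.lapMatrix ℝ := by
    rw [← Matrix.mul_assoc]; exact (isMP_gInv G hc).1
  rw [LS_mul_X G hc]
  conv_lhs => rw [lapS_block]
  conv_rhs => rw [lapS_block]
  rw [Matrix.fromBlocks_multiply, Matrix.fromBlocks_inj]
  refine ⟨?_, ?_, ?_, ?_⟩ <;>
  · simp only [degMatrix_eq, Matrix.mul_add, Matrix.add_mul, Matrix.sub_mul, Matrix.mul_sub,
      Matrix.mul_neg, Matrix.neg_mul, Matrix.mul_smul, Matrix.smul_mul, Matrix.mul_one,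
      Matrix.one_mul, Matrix.zero_mul, Matrix.mul_zero, smul_add, smul_sub, smul_neg,
      smul_smul, Matrix.mul_assoc, BBt_mul, Bmat_mul_transpose, hLgL]
    try module

end Subdiv

section Main
open Finset

variable {W : Type*} [Fintype W] [DecidableEq W]
variable (G : SimpleGraph W) [DecidableRel G.Adj]

lemma resistanceS_eq (hc : G.Connected) (x y : W ⊕ G.edgeSet) :
    resistanceDistance (subdivision G) x y = Xmat G x x + Xmat G y y - 2 * Xmat G x y := by
  have hcS := subdivision_connected G hc
  rw [resistance_eq (gInv (subdivision G)) (isMP_gInv _ hcS) x y]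
  have hform : ∀ M : Matrix (W ⊕ G.edgeSet) (W ⊕ G.edgeSet) ℝ, Mᵀ = M →
      M x x + M y y - 2 * M x y = pairVec x y ⬝ᵥ (M *ᵥ pairVec x y) := by
    intro M hM
    rw [dot_pairVec]
    have h2 : M y x = M x y := congrFun (congrFun hM x) y
    rw [h2]; ring
  rw [hform _ (gInv_transpose (subdivision G)), hform _ (Xmat_transpose G)]
  exact (quad_transfer ((subdivision G).lapMatrix ℝ) (gInv (subdivision G)) (Xmat G)
    (Fintype.card (W ⊕ G.edgeSet) : ℝ)⁻¹ ((subdivision G).isSymm_lapMatrix (R := ℝ))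
    (LS_X_LS G hc) (lap_mul_gInv (subdivision G) hcS) _ (sum_pairVec x y)).symm

lemma Xmat_apply_11 (u v : W) : Xmat G (Sum.inl u) (Sum.inl v) = 2 * gInv G u v := by
  rw [Xmat, Matrix.fromBlocks_apply₁₁, Matrix.smul_apply, smul_eq_mul]

lemma Xmat_apply_22 (e f : G.edgeSet) : Xmat G (Sum.inr e) (Sum.inr f)
    = (1/2 : ℝ) * ((1 : Matrix G.edgeSet G.edgeSet ℝ) e f
        + ((Bmat G)ᵀ * gInv G * Bmat G) e f) := by
  rw [Xmat, Matrix.fromBlocks_apply₂₂, Matrix.smul_apply, Matrix.add_apply, smul_eq_mul]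

lemma dot_eq_sum {κ : Type*} [Fintype κ] (d : κ → ℝ) (M : Matrix κ κ ℝ) :
    ∑ x, ∑ y, d x * M x y * d y = d ⬝ᵥ (M *ᵥ d) := by
  simp only [dotProduct, Matrix.mulVec, Finset.mul_sum]
  exact Finset.sum_congr rfl fun x _ => Finset.sum_congr rfl fun y _ => by ring

lemma Bmat_mulVec_ones : Bmat G *ᵥ (fun _ => (1:ℝ)) = fun u => (G.degree u : ℝ) := by
  ext u
  simpa [Matrix.mulVec, dotProduct] using row_sum_Bmat G u

lemma ones_dot_BmatT (w : W → ℝ) :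
    (fun _ => (1:ℝ)) ⬝ᵥ ((Bmat G)ᵀ *ᵥ w) = (fun u => (G.degree u : ℝ)) ⬝ᵥ w := by
  simp only [dotProduct, Matrix.mulVec, Matrix.transpose_apply, one_mul]
  rw [Finset.sum_comm]
  exact Finset.sum_congr rfl fun u _ => by rw [← Finset.sum_mul, row_sum_Bmat]

lemma QS_eq (hc : G.Connected) :
    Sum.elim (fun u => (G.degree u : ℝ)) (fun _ => (2:ℝ)) ⬝ᵥ
      (Xmat G *ᵥ Sum.elim (fun u => (G.degree u : ℝ)) (fun _ => (2:ℝ)))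
    = 8 * ((fun u => (G.degree u : ℝ)) ⬝ᵥ (gInv G *ᵥ fun u => (G.degree u : ℝ)))
      + 2 * (Fintype.card G.edgeSet : ℝ) := by
  have hB2 : Bmat G *ᵥ (fun _ => (2:ℝ)) = (2:ℝ) • fun u => (G.degree u : ℝ) := by
    rw [show (fun _ : G.edgeSet => (2:ℝ)) = (2:ℝ) • (fun _ : G.edgeSet => (1:ℝ)) from by
      funext e; simp]
    rw [Matrix.mulVec_smul, Bmat_mulVec_ones]
  have hX : Xmat G *ᵥ Sum.elim (fun u => (G.degree u : ℝ)) (fun _ => (2:ℝ))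
      = Sum.elim ((4:ℝ) • (gInv G *ᵥ fun u => (G.degree u : ℝ)))
          ((2:ℝ) • ((Bmat G)ᵀ *ᵥ (gInv G *ᵥ fun u => (G.degree u : ℝ))) + fun _ => 1) := by
    have hvec : (fun _ : G.edgeSet => (2:ℝ)) = (2:ℝ) • (fun _ : G.edgeSet => (1:ℝ)) := by
      funext e
      simp only [Pi.smul_apply, smul_eq_mul, mul_one]
    rw [Xmat, Matrix.fromBlocks_mulVec]
    simp only [Sum.elim_comp_inl, Sum.elim_comp_inr]
    have h1 : ((2:ℝ) • gInv G) *ᵥ (fun u => (G.degree u : ℝ))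
          + (gInv G * Bmat G) *ᵥ (fun _ => (2:ℝ))
        = (4:ℝ) • (gInv G *ᵥ fun u => (G.degree u : ℝ)) := by
      rw [smul_mulVec, ← Matrix.mulVec_mulVec, hB2, Matrix.mulVec_smul]
      module
    have h2 : ((Bmat G)ᵀ * gInv G) *ᵥ (fun u => (G.degree u : ℝ))
          + ((1/2 : ℝ) • (1 + (Bmat G)ᵀ * gInv G * Bmat G)) *ᵥ (fun _ => (2:ℝ))
        = (2:ℝ) • ((Bmat G)ᵀ *ᵥ (gInv G *ᵥ fun u => (G.degree u : ℝ))) + fun _ => 1 := by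
      rw [smul_mulVec, Matrix.add_mulVec, Matrix.one_mulVec,
        ← Matrix.mulVec_mulVec (fun _ => (2:ℝ)) ((Bmat G)ᵀ * gInv G) (Bmat G), hB2,
        Matrix.mulVec_smul,
        ← Matrix.mulVec_mulVec (fun u => (G.degree u : ℝ)) ((Bmat G)ᵀ) (gInv G), hvec]
      module
    rw [h1, h2]
  rw [hX, sumElim_dotProduct_sumElim, dotProduct_smul,
    dotProduct_add, dotProduct_smul]
  rw [show (fun _ : G.edgeSet => (2:ℝ)) = (2:ℝ) • (fun _ : G.edgeSet => (1:ℝ)) from by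
    funext e; simp]
  rw [smul_dotProduct, smul_dotProduct, ones_dot_BmatT]
  rw [show (fun _ : G.edgeSet => (1:ℝ)) ⬝ᵥ (fun _ : G.edgeSet => (1:ℝ))
      = (Fintype.card G.edgeSet : ℝ) from by
    simp [dotProduct, Finset.card_univ]]
  simp only [smul_eq_mul]
  ring

lemma trace_gL (hc : G.Connected) :
    ∑ u, (gInv G * G.lapMatrix ℝ) u u = (Fintype.card W : ℝ) - 1 := by
  have hcard : (Fintype.card W : ℝ) ≠ 0 := by
    have := hc.nonempty
    exact_mod_cast Fintype.card_ne_zero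
  rw [gInv_mul_lap G hc]
  have h1 : ∀ u : W, ((1 : Matrix W W ℝ) - (Fintype.card W : ℝ)⁻¹ • onesM W) u u
      = 1 - (Fintype.card W : ℝ)⁻¹ := by
    intro u
    simp [onesM, Matrix.sub_apply, Matrix.one_apply_eq, Matrix.smul_apply]
  rw [Finset.sum_congr rfl fun u _ => h1 u, Finset.sum_const, Finset.card_univ, nsmul_eq_mul,
    mul_sub, mul_one, mul_inv_cancel₀ hcard]

lemma sum_g_degMatrix (f : W → W → ℝ) :
    ∑ u, ∑ v, f u v * G.degMatrix ℝ u v = ∑ u, f u u * (G.degree u : ℝ) := by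
  refine Finset.sum_congr rfl fun u _ => ?_
  simp only [SimpleGraph.degMatrix, Matrix.diagonal_apply, mul_ite, mul_zero]
  simp [Finset.sum_ite_eq]

lemma sum_g_adj (hc : G.Connected) :
    ∑ u, ∑ v, gInv G u v * G.adjMatrix ℝ u v
      = (∑ u, gInv G u u * (G.degree u : ℝ)) - ((Fintype.card W : ℝ) - 1) := by
  have h1 : ∑ u, (gInv G * G.lapMatrix ℝ) u u
      = ∑ u, ∑ v, gInv G u v * G.lapMatrix ℝ u v := by
    refine Finset.sum_congr rfl fun u _ => ?_
    rw [Matrix.mul_apply]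
    refine Finset.sum_congr rfl fun v _ => ?_
    rw [show G.lapMatrix ℝ v u = G.lapMatrix ℝ u v from
      congrFun (congrFun (G.isSymm_lapMatrix (R := ℝ)) u) v]
  have h2 : ∑ u, ∑ v, gInv G u v * G.lapMatrix ℝ u v
      = (∑ u, gInv G u u * (G.degree u : ℝ))
        - ∑ u, ∑ v, gInv G u v * G.adjMatrix ℝ u v := by
    simp only [SimpleGraph.lapMatrix, Matrix.sub_apply, mul_sub, Finset.sum_sub_distrib]
    rw [sum_g_degMatrix G (gInv G)]
  have h3 := trace_gL G hc
  rw [h1, h2] at h3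
  linarith

lemma BtgB_entry (e f : G.edgeSet) : ((Bmat G)ᵀ * gInv G * Bmat G) e f
    = ∑ v, ∑ u, Bmat G u e * gInv G u v * Bmat G v f := by
  simp only [Matrix.mul_apply, Matrix.transpose_apply, Finset.sum_mul]

lemma sum_BtgB_diag (hc : G.Connected) :
    ∑ e : G.edgeSet, ((Bmat G)ᵀ * gInv G * Bmat G) e e
      = 2 * (∑ u, gInv G u u * (G.degree u : ℝ)) - ((Fintype.card W : ℝ) - 1) := by
  rw [Finset.sum_congr rfl fun e _ => BtgB_entry G e e, Finset.sum_comm]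
  have h1 : ∀ v, ∑ e : G.edgeSet, ∑ u, Bmat G u e * gInv G u v * Bmat G v e
      = ∑ u, gInv G u v * ((G.degMatrix ℝ + G.adjMatrix ℝ) u v) := by
    intro v
    rw [Finset.sum_comm]
    refine Finset.sum_congr rfl fun u _ => ?_
    rw [Finset.sum_congr rfl fun e (_ : e ∈ Finset.univ) =>
      show Bmat G u e * gInv G u v * Bmat G v e = gInv G u v * (Bmat G u e * Bmat G v e)
      from by ring]
    rw [← Finset.mul_sum, pair_sum_Bmat]
    congr 1
    try simp [SimpleGraph.degMatrix, Matrix.diagonal_apply, Matrix.add_apply]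
  rw [Finset.sum_congr rfl fun v _ => h1 v]
  simp only [Matrix.add_apply, mul_add, Finset.sum_add_distrib]
  rw [show (∑ v, ∑ u, gInv G u v * G.degMatrix ℝ u v)
      = ∑ u, ∑ v, gInv G u v * G.degMatrix ℝ u v from Finset.sum_comm]
  rw [show (∑ v, ∑ u, gInv G u v * G.adjMatrix ℝ u v)
      = ∑ u, ∑ v, gInv G u v * G.adjMatrix ℝ u v from Finset.sum_comm]
  rw [sum_g_degMatrix G (gInv G), sum_g_adj G hc]
  try ring

end Main

theorem statement_2 {V : Type*} [Fintype V] [DecidableEq V]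
    (G : SimpleGraph V) [DecidableRel G.Adj] (n m : ℕ)
    (hn : Fintype.card V = n) (hm : G.edgeFinset.card = m)
    (hconn : G.Connected) (hn2 : 2 ≤ n) :
    mulDegKirchhoffIndex (subdivision G) =
      8 * mulDegKirchhoffIndex G + 2 * m * (2 * (m : ℝ) - 2 * n + 1) := by
  have hresG : ∀ i j, resistanceDistance G i j
      = gInv G i i + gInv G j j - 2 * gInv G i j :=
    fun i j => resistance_eq (gInv G) (isMP_gInv G hconn) i j
  rw [mulDeg_formula (subdivision G) (Xmat G) (resistanceS_eq G hconn),
      mulDeg_formula G (gInv G) hresG]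
  have hdS : ∀ x : V ⊕ G.edgeSet, ((subdivision G).degree x : ℝ)
      = Sum.elim (fun u => (G.degree u : ℝ)) (fun _ => (2:ℝ)) x := by
    rintro (u | e)
    · exact subdiv_degree_inl G u
    · exact subdiv_degree_inr G e
  simp only [hdS]
  -- basic cardinalities
  have hnV : (Fintype.card V : ℝ) = (n : ℝ) := by exact_mod_cast congrArg Nat.cast hn
  have hmE : (Fintype.card G.edgeSet : ℝ) = (m : ℝ) := by
    have : Fintype.card G.edgeSet = m := by rw [← SimpleGraph.edgeFinset_card]; exact hm
    exact_mod_cast congrArg Nat.cast this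
  have hdeg2m : ∑ u, (G.degree u : ℝ) = 2 * (m : ℝ) := by
    have h := G.sum_degrees_eq_twice_card_edges
    have h2 : ((∑ u, G.degree u : ℕ) : ℝ) = ((2 * G.edgeFinset.card : ℕ) : ℝ) := by
      exact_mod_cast congrArg Nat.cast h
    rw [Nat.cast_sum] at h2
    rw [h2, hm]
    push_cast
    ring
  -- the three aggregate sums
  have hSD : ∑ x : V ⊕ G.edgeSet, Sum.elim (fun u => (G.degree u : ℝ)) (fun _ => (2:ℝ)) x
      = 4 * (m : ℝ) := by
    rw [Fintype.sum_sum_type]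
    simp only [Sum.elim_inl, Sum.elim_inr]
    rw [hdeg2m, Finset.sum_const, Finset.card_univ, nsmul_eq_mul, hmE]
    ring
  have hTS : ∑ x : V ⊕ G.edgeSet,
        Sum.elim (fun u => (G.degree u : ℝ)) (fun _ => (2:ℝ)) x * Xmat G x x
      = 2 * (∑ u, (G.degree u : ℝ) * gInv G u u)
        + ((m : ℝ) + (2 * (∑ u, (G.degree u : ℝ) * gInv G u u) - ((n:ℝ) - 1))) := by
    rw [Fintype.sum_sum_type]
    simp only [Sum.elim_inl, Sum.elim_inr]
    congr 1
    · rw [Finset.mul_sum]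
      refine Finset.sum_congr rfl fun u _ => ?_
      rw [Xmat_apply_11]
      ring
    · rw [Finset.sum_congr rfl fun e (_ : e ∈ Finset.univ) =>
        show (2:ℝ) * Xmat G (Sum.inr e) (Sum.inr e)
          = 1 + ((Bmat G)ᵀ * gInv G * Bmat G) e e from by
          rw [Xmat_apply_22, Matrix.one_apply_eq]; ring]
      rw [Finset.sum_add_distrib, Finset.sum_const, Finset.card_univ, nsmul_eq_mul, mul_one,
        hmE, sum_BtgB_diag G hconn, hnV]
      congr 2
      rw [Finset.mul_sum, Finset.mul_sum]
      exact Finset.sum_congr rfl fun u _ => by ring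
  have hQS : ∑ x : V ⊕ G.edgeSet, ∑ y : V ⊕ G.edgeSet,
        Sum.elim (fun u => (G.degree u : ℝ)) (fun _ => (2:ℝ)) x * Xmat G x y *
          Sum.elim (fun u => (G.degree u : ℝ)) (fun _ => (2:ℝ)) y
      = 8 * (∑ u, ∑ v, (G.degree u : ℝ) * gInv G u v * (G.degree v : ℝ)) + 2 * (m:ℝ) := by
    rw [dot_eq_sum, QS_eq G hconn, hmE, dot_eq_sum]
  rw [hSD, hTS, hQS, hdeg2m]
  ring



end KirchhoffPaper
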